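/- Let H₇ be a connected simple graph containing two cycles C₁ and C₂ whose only common vertex is v, where d(v) ≥ 4 and C₂ is an endblock (every vertex of C₂ other than v has degree 2 in H₇). Let v₂ be a neighbor of v on C₁, let v₁ be a neighbor of v on C₂, and let v₀ be the neighbor of v₁ on C₂ other than v. Let H₈ = H₇ − {vv₂, v₀v₁} + {v₀v₂}. Then M₂(H₈) < M₂(H₇). -/

import Mathlib

open scoped Classical

open SimpleGraph in
/-- In a cycle through `a`, the start vertex `a` has two distinct neighbors on the cycle. -/
lemma cycle_two_nbrs {V : Type*} {G : SimpleGraph V} {a : V} (p : G.Walk a a)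
    (hp : p.IsCycle) : ∃ x y, x ≠ y ∧ G.Adj a x ∧ G.Adj a y ∧
      x ∈ p.support ∧ y ∈ p.support := by
  cases p with
  | nil => exact absurd rfl hp.ne_nil
  | @cons _ b _ h q =>
    have hab : a ≠ b := h.ne
    obtain ⟨c, h', r, hqr⟩ := SimpleGraph.Walk.exists_eq_cons_of_ne hab q.reverse
    refine ⟨b, c, ?_, h, h', ?_, ?_⟩
    · rintro rfl
      have hedges : (Walk.cons h q).edges.Nodup := hp.isTrail.edges_nodup
      rw [Walk.edges_cons, List.nodup_cons] at hedges
      apply hedges.1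
      have : s(a, b) ∈ q.reverse.edges := by rw [hqr, Walk.edges_cons]; exact List.mem_cons_self
      rwa [Walk.edges_reverse, List.mem_reverse] at this
    · simp [Walk.support_cons, Walk.start_mem_support q]
    · have hc : c ∈ q.reverse.support := by
        rw [hqr, Walk.support_cons]; exact List.mem_cons_of_mem _ (Walk.start_mem_support r)
      rw [Walk.support_reverse, List.mem_reverse] at hc
      simp [Walk.support_cons]
      exact Or.inr hc

/-- The second Zagreb index: the sum over all edges of the product of the
degrees of the two endpoints. -/
noncomputable def zagrebM2 {V : Type*} [Fintype V] (G : SimpleGraph V) : ℕ :=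
  ∑ e ∈ G.edgeFinset,
    Sym2.lift ⟨fun x y => G.degree x * G.degree y, fun _ _ => Nat.mul_comm _ _⟩ e

/-- Operation IV: `H₇` is connected and contains two cycles `c₁` and `c₂` whose
only common vertex is `v`, with `d(v) ≥ 4` and `c₂` an endblock (every vertex of
`c₂` other than `v` has degree 2 in `H₇`). If `v₂` is a neighbor of `v` on `c₁`,
`v₁` is a neighbor of `v` on `c₂`, and `v₀` is the neighbor of `v₁` on `c₂` other
than `v`, then `H₈ = H₇ - {vv₂, v₀v₁} + {v₀v₂}` satisfies `M₂(H₈) < M₂(H₇)`. -/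
theorem M2_operationIV_lt {V : Type*} [Fintype V] (H₇ : SimpleGraph V)
    (hconn : H₇.Connected) (v v₀ v₁ v₂ : V)
    (c₁ : H₇.Walk v v) (c₂ : H₇.Walk v v)
    (hc₁ : c₁.IsCycle) (hc₂ : c₂.IsCycle)
    (hmeet : ∀ x, x ∈ c₁.support → x ∈ c₂.support → x = v)
    (hdeg : 4 ≤ H₇.degree v)
    (hend : ∀ x ∈ c₂.support, x ≠ v → H₇.degree x = 2)
    (hv₂ : s(v, v₂) ∈ c₁.edges)
    (hv₁ : s(v, v₁) ∈ c₂.edges)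
    (hv₀ : s(v₁, v₀) ∈ c₂.edges) (hv₀v : v₀ ≠ v)
    (H₈ : SimpleGraph V)
    (hH₈ : H₈ = SimpleGraph.fromEdgeSet
      ((H₇.edgeSet \ {s(v, v₂), s(v₀, v₁)}) ∪ {s(v₀, v₂)})) :
    zagrebM2 H₈ < zagrebM2 H₇ := by
  classical
  have hadj_vv₂ : H₇.Adj v v₂ := c₁.adj_of_mem_edges hv₂
  have hadj_vv₁ : H₇.Adj v v₁ := c₂.adj_of_mem_edges hv₁
  have hadj_v₁v₀ : H₇.Adj v₁ v₀ := c₂.adj_of_mem_edges hv₀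
  have hne_vv₂ : v ≠ v₂ := hadj_vv₂.ne
  have hne_vv₁ : v ≠ v₁ := hadj_vv₁.ne
  have hne_v₁v₀ : v₁ ≠ v₀ := hadj_v₁v₀.ne
  have hv₂s : v₂ ∈ c₁.support := SimpleGraph.Walk.snd_mem_support_of_mem_edges _ hv₂
  have hv₁s : v₁ ∈ c₂.support := SimpleGraph.Walk.snd_mem_support_of_mem_edges _ hv₁
  have hv₀s : v₀ ∈ c₂.support := SimpleGraph.Walk.snd_mem_support_of_mem_edges _ hv₀
  have hv₂nc₂ : v₂ ∉ c₂.support := fun h => hne_vv₂ (hmeet v₂ hv₂s h).symm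
  have hne_v₀v₂ : v₀ ≠ v₂ := fun h => hv₂nc₂ (h ▸ hv₀s)
  have hne_v₁v₂ : v₁ ≠ v₂ := fun h => hv₂nc₂ (h ▸ hv₁s)
  have hdeg₀ : H₇.degree v₀ = 2 := hend v₀ hv₀s hv₀v
  have hdeg₁ : H₇.degree v₁ = 2 := hend v₁ hv₁s (Ne.symm hne_vv₁)
  -- every H₇-neighbor of v₀ lies on c₂
  have hnbr₀ : ∀ w, H₇.Adj v₀ w → w ∈ c₂.support := by
    obtain ⟨x, y, hxy, hax, hay, hxs, hys⟩ :=
      cycle_two_nbrs (c₂.rotate v₀ hv₀s) (hc₂.rotate hv₀s)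
    have hrot : ∀ z, z ∈ (c₂.rotate v₀ hv₀s).support → z ∈ c₂.support := by
      intro z hz
      rw [SimpleGraph.Walk.support_eq_cons] at hz
      rcases List.mem_cons.mp hz with rfl | hz
      · exact hv₀s
      · have := (SimpleGraph.Walk.support_rotate c₂ v₀ hv₀s).mem_iff.mp hz
        exact List.mem_of_mem_tail this
    have hsub : ({x, y} : Finset V) ⊆ H₇.neighborFinset v₀ := by
      intro z hz
      simp only [Finset.mem_insert, Finset.mem_singleton] at hz
      rcases hz with rfl | rfl
      · exact (SimpleGraph.mem_neighborFinset _ _ _).mpr hax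
      · exact (SimpleGraph.mem_neighborFinset _ _ _).mpr hay
    have hcard : ({x, y} : Finset V).card = 2 := Finset.card_pair hxy
    have heq : ({x, y} : Finset V) = H₇.neighborFinset v₀ :=
      Finset.eq_of_subset_of_card_le hsub (by rw [hcard]; exact le_of_eq hdeg₀)
    intro w hw
    have : w ∈ ({x, y} : Finset V) := heq ▸ (SimpleGraph.mem_neighborFinset _ _ _).mpr hw
    simp only [Finset.mem_insert, Finset.mem_singleton] at this
    rcases this with rfl | rfl
    · exact hrot _ hxs
    · exact hrot _ hys
  have hnadj : ¬ H₇.Adj v₀ v₂ := fun h => hv₂nc₂ (hnbr₀ v₂ h)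
  -- adjacency in H₈
  have hadj₈ : ∀ x y, H₈.Adj x y ↔
      (H₇.Adj x y ∧ s(x, y) ≠ s(v, v₂) ∧ s(x, y) ≠ s(v₀, v₁)) ∨ s(x, y) = s(v₀, v₂) := by
    subst hH₈
    intro x y
    rw [SimpleGraph.fromEdgeSet_adj]
    constructor
    · rintro ⟨hmem, hne⟩
      rcases hmem with ⟨hm, hnm⟩ | hm
      · simp only [Set.mem_insert_iff, Set.mem_singleton_iff, not_or] at hnm
        exact Or.inl ⟨(SimpleGraph.mem_edgeSet _).mp hm, hnm.1, hnm.2⟩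
      · exact Or.inr hm
    · rintro (⟨ha, h1, h2⟩ | he)
      · exact ⟨Or.inl ⟨(SimpleGraph.mem_edgeSet _).mpr ha, by
          simp only [Set.mem_insert_iff, Set.mem_singleton_iff, not_or]; exact ⟨h1, h2⟩⟩, ha.ne⟩
      · refine ⟨Or.inr he, ?_⟩
        rw [Sym2.eq_iff] at he
        rcases he with ⟨rfl, rfl⟩ | ⟨rfl, rfl⟩
        · exact hne_v₀v₂
        · exact Ne.symm hne_v₀v₂
  -- degrees in H₈ are at most those in H₇
  have hsubN : ∀ x, x ≠ v₀ → x ≠ v₂ → H₈.neighborFinset x ⊆ H₇.neighborFinset x := by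
    intro x hx0 hx2 y hy
    rw [SimpleGraph.mem_neighborFinset] at hy ⊢
    rcases (hadj₈ x y).mp hy with ⟨ha, _, _⟩ | he
    · exact ha
    · rw [Sym2.eq_iff] at he
      rcases he with ⟨rfl, rfl⟩ | ⟨rfl, rfl⟩
      · exact absurd rfl hx0
      · exact absurd rfl hx2
  have hbound : ∀ (a rem add : V),
      H₈.neighborFinset a ⊆ insert add ((H₇.neighborFinset a).erase rem) →
      rem ∈ H₇.neighborFinset a → H₈.degree a ≤ H₇.degree a := by
    intro a rem add hsub hmem
    have h1 : (H₈.neighborFinset a).card ≤ ((H₇.neighborFinset a).erase rem).card + 1 :=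
      le_trans (Finset.card_le_card hsub) (Finset.card_insert_le _ _)
    rw [Finset.card_erase_of_mem hmem] at h1
    have h2 : 1 ≤ (H₇.neighborFinset a).card := Finset.card_pos.mpr ⟨rem, hmem⟩
    simp only [SimpleGraph.degree]
    omega
  have hdegle : ∀ x, H₈.degree x ≤ H₇.degree x := by
    intro x
    by_cases hx0 : x = v₀
    · rw [hx0]
      refine hbound v₀ v₁ v₂ ?_ ((SimpleGraph.mem_neighborFinset _ _ _).mpr hadj_v₁v₀.symm)
      intro y hy
      rw [SimpleGraph.mem_neighborFinset] at hy
      rcases (hadj₈ _ _).mp hy with ⟨ha, h1, h2⟩ | he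
      · refine Finset.mem_insert_of_mem (Finset.mem_erase.mpr
          ⟨?_, (SimpleGraph.mem_neighborFinset _ _ _).mpr ha⟩)
        rintro rfl; exact h2 rfl
      · rw [Sym2.eq_iff] at he
        rcases he with ⟨_, rfl⟩ | ⟨h', rfl⟩
        · exact Finset.mem_insert_self _ _
        · exact absurd h' hne_v₀v₂
    by_cases hx2 : x = v₂
    · rw [hx2]
      refine hbound v₂ v v₀ ?_ ((SimpleGraph.mem_neighborFinset _ _ _).mpr hadj_vv₂.symm)
      intro y hy
      rw [SimpleGraph.mem_neighborFinset] at hy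
      rcases (hadj₈ _ _).mp hy with ⟨ha, h1, h2⟩ | he
      · refine Finset.mem_insert_of_mem (Finset.mem_erase.mpr
          ⟨?_, (SimpleGraph.mem_neighborFinset _ _ _).mpr ha⟩)
        rintro rfl; exact h1 (Sym2.eq_swap)
      · rw [Sym2.eq_iff] at he
        rcases he with ⟨h', rfl⟩ | ⟨_, rfl⟩
        · exact absurd h'.symm hne_v₀v₂
        · exact Finset.mem_insert_self _ _
    · have := Finset.card_le_card (hsubN x hx0 hx2)
      simpa only [SimpleGraph.degree] using this
  -- the edge finset of H₈
  have hne_e21 : s(v₀, v₁) ≠ s(v, v₂) := by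
    intro h
    rcases Sym2.eq_iff.mp h with ⟨h', _⟩ | ⟨h', _⟩
    · exact hv₀v h'
    · exact hne_v₀v₂ h'
  have hmem1 : s(v, v₂) ∈ H₇.edgeFinset := by
    rw [SimpleGraph.mem_edgeFinset]; exact hadj_vv₂
  have hmem2 : s(v₀, v₁) ∈ H₇.edgeFinset.erase s(v, v₂) :=
    Finset.mem_erase.mpr ⟨hne_e21, by rw [SimpleGraph.mem_edgeFinset]; exact hadj_v₁v₀.symm⟩
  have hnotmem3 : s(v₀, v₂) ∉ (H₇.edgeFinset.erase s(v, v₂)).erase s(v₀, v₁) := by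
    intro h
    have := Finset.mem_of_mem_erase (Finset.mem_of_mem_erase h)
    rw [SimpleGraph.mem_edgeFinset] at this
    exact hnadj this
  have hE : H₈.edgeFinset = insert s(v₀, v₂) ((H₇.edgeFinset.erase s(v, v₂)).erase s(v₀, v₁)) := by
    ext e
    induction e using Sym2.ind with
    | _ x y =>
      rw [SimpleGraph.mem_edgeFinset, SimpleGraph.mem_edgeSet, hadj₈]
      simp only [Finset.mem_insert, Finset.mem_erase, SimpleGraph.mem_edgeFinset,
        SimpleGraph.mem_edgeSet]
      constructor
      · rintro (⟨ha, h1, h2⟩ | he)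
        · exact Or.inr ⟨h2, h1, ha⟩
        · exact Or.inl he
      · rintro (he | ⟨h2, h1, ha⟩)
        · exact Or.inr he
        · exact Or.inl ⟨ha, h1, h2⟩
  set f : Sym2 V → ℕ :=
    Sym2.lift ⟨fun x y => H₇.degree x * H₇.degree y, fun _ _ => Nat.mul_comm _ _⟩ with hf
  have hfle : ∀ e : Sym2 V,
      Sym2.lift ⟨fun x y => H₈.degree x * H₈.degree y, fun _ _ => Nat.mul_comm _ _⟩ e ≤ f e := by
    intro e
    induction e using Sym2.ind with
    | _ x y =>
      simp only [hf, Sym2.lift_mk]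
      exact Nat.mul_le_mul (hdegle x) (hdegle y)
  have hstrict : f s(v₀, v₂) < f s(v, v₂) + f s(v₀, v₁) := by
    simp only [hf, Sym2.lift_mk, hdeg₀, hdeg₁]
    have h2 : 2 * H₇.degree v₂ ≤ H₇.degree v * H₇.degree v₂ :=
      Nat.mul_le_mul_right _ (by omega)
    omega
  calc zagrebM2 H₈
      = ∑ e ∈ H₈.edgeFinset,
          Sym2.lift ⟨fun x y => H₈.degree x * H₈.degree y, fun _ _ => Nat.mul_comm _ _⟩ e := rfl
    _ ≤ ∑ e ∈ H₈.edgeFinset, f e := Finset.sum_le_sum (fun e _ => hfle e)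
    _ = f s(v₀, v₂) + ∑ e ∈ (H₇.edgeFinset.erase s(v, v₂)).erase s(v₀, v₁), f e := by
        rw [hE, Finset.sum_insert hnotmem3]
    _ < (f s(v, v₂) + f s(v₀, v₁)) +
          ∑ e ∈ (H₇.edgeFinset.erase s(v, v₂)).erase s(v₀, v₁), f e :=
        Nat.add_lt_add_right hstrict _
    _ = zagrebM2 H₇ := by
        rw [add_assoc, Finset.add_sum_erase _ f hmem2, Finset.add_sum_erase _ f hmem1]
        rfl
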